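/- arXiv:2402.00194 — 7 statements merged into one kernel-verified Lean document; each statement's English description precedes it below -/
import Mathlib

section
/- Let (x_s) be a sequence of real numbers converging to a limit x*, with errors e_s = |x* - x_s| > 0 for all s. Suppose that for some p > 1 and Q ∈ (0, ∞) the sequence has C-order p, i.e. e_{s+1}/(e_s)^p → Q. Then the corrections c_s = |x_{s+1} - x_s| are eventually positive and satisfy c_{s+1}/(c_s)^p → Q; that is, the sequence has C'-order p with the same asymptotic constant Q. -/
open Filter

/-- C-order `p > 1` with constant `Q ∈ (0, ∞)` for the errors implies C'-order `p`
with the same constant `Q` for the corrections. -/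
theorem Cprime_order_of_C_order
    (x : ℕ → ℝ) (xstar : ℝ) (p Q : ℝ)
    (hp : 1 < p) (hQ : 0 < Q)
    (hconv : Tendsto x atTop (nhds xstar))
    (hpos : ∀ s, 0 < |xstar - x s|)
    (hC : Tendsto (fun s => |xstar - x (s + 1)| / |xstar - x s| ^ p) atTop (nhds Q)) :
    (∀ᶠ s in atTop, 0 < |x (s + 1) - x s|) ∧
      Tendsto (fun s => |x (s + 2) - x (s + 1)| / |x (s + 1) - x s| ^ p) atTop (nhds Q) := by
  have he : ∀ s, 0 < |xstar - x s| := hpos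
  set e : ℕ → ℝ := fun s => |xstar - x s| with he_def
  set c : ℕ → ℝ := fun s => |x (s + 1) - x s| with hc_def
  have he0 : Tendsto e atTop (nhds 0) := by
    have h : Tendsto (fun s => xstar - x s) atTop (nhds (xstar - xstar)) :=
      tendsto_const_nhds.sub hconv
    simpa [he_def] using h.abs
  have hp1 : (0:ℝ) < p - 1 := by linarith
  have hpow : Tendsto (fun s => e s ^ (p - 1)) atTop (nhds 0) := by
    have hcont : ContinuousAt (fun t : ℝ => t ^ (p - 1)) 0 :=
      Real.continuousAt_rpow_const 0 (p - 1) (Or.inr hp1.le)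
    have h := hcont.tendsto.comp he0
    simpa [Real.zero_rpow (ne_of_gt hp1), Function.comp_def] using h
  have h1 : ∀ s, e s ^ (p - 1) * e s = e s ^ p := by
    intro s
    rw [← Real.rpow_add_one (ne_of_gt (he s)) (p - 1), sub_add_cancel]
  have hrho : Tendsto (fun s => e (s + 1) / e s) atTop (nhds 0) := by
    have hEq : ∀ s, (e (s + 1) / e s ^ p) * e s ^ (p - 1) = e (s + 1) / e s := by
      intro s
      rw [div_mul_eq_mul_div,
        div_eq_div_iff (ne_of_gt (Real.rpow_pos_of_pos (he s) p)) (ne_of_gt (he s)),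
        mul_assoc, h1 s]
    have h := hC.mul hpow
    rw [mul_zero] at h
    exact (h.congr hEq)
  have hbound : ∀ s, |c s / e s - 1| ≤ e (s + 1) / e s := by
    intro s
    have hcs : c s = |(xstar - x s) - (xstar - x (s + 1))| := by
      simp only [hc_def]; congr 1; ring
    have hb : |c s - e s| ≤ e (s + 1) := by
      rw [hcs]
      calc |(|(xstar - x s) - (xstar - x (s + 1))|) - e s|
          ≤ |((xstar - x s) - (xstar - x (s + 1))) - (xstar - x s)| :=
            abs_abs_sub_abs_le_abs_sub _ _
        _ = e (s + 1) := by
            have hr : ((xstar - x s) - (xstar - x (s + 1))) - (xstar - x s)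
                = -(xstar - x (s + 1)) := by ring
            rw [hr, abs_neg]
    have h2 : c s / e s - 1 = (c s - e s) / e s := by
      rw [sub_div, div_self (ne_of_gt (he s))]
    rw [h2, abs_div, abs_of_pos (he s)]
    gcongr
  have hratio : Tendsto (fun s => c s / e s) atTop (nhds 1) := by
    rw [← tendsto_sub_nhds_zero_iff]
    exact squeeze_zero_norm (fun s => by simpa [Real.norm_eq_abs] using hbound s) hrho
  have hcpos : ∀ᶠ s in atTop, 0 < c s := by
    have h := hratio.eventually (lt_mem_nhds (show (0:ℝ) < 1 by norm_num))
    filter_upwards [h] with s hs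
    have := mul_pos hs (he s)
    rwa [div_mul_cancel₀ _ (ne_of_gt (he s))] at this
  refine ⟨hcpos, ?_⟩
  have hinv : Tendsto (fun s => e s / c s) atTop (nhds 1) := by
    have h := hratio.inv₀ one_ne_zero
    simpa [inv_div] using h
  have hpow1 : Tendsto (fun s => (e s / c s) ^ p) atTop (nhds 1) := by
    have hcont : ContinuousAt (fun t : ℝ => t ^ p) 1 :=
      Real.continuousAt_rpow_const 1 p (Or.inl one_ne_zero)
    have h := hcont.tendsto.comp hinv
    simpa [Real.one_rpow, Function.comp_def] using h
  have hshift : Tendsto (fun s => c (s + 1) / e (s + 1)) atTop (nhds 1) :=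
    hratio.comp (tendsto_add_atTop_nat 1)
  have hmain : Tendsto (fun s => (c (s + 1) / e (s + 1)) * (e (s + 1) / e s ^ p) * (e s / c s) ^ p)
      atTop (nhds Q) := by
    have h := (hshift.mul hC).mul hpow1
    simpa using h
  refine hmain.congr' ?_
  filter_upwards [hcpos] with s hs
  have hE1 : e (s + 1) ≠ 0 := ne_of_gt (he (s + 1))
  have hEp : e s ^ p ≠ 0 := ne_of_gt (Real.rpow_pos_of_pos (he s) p)
  have hCp : c s ^ p ≠ 0 := ne_of_gt (Real.rpow_pos_of_pos hs p)
  have : (c (s + 1) / e (s + 1)) * (e (s + 1) / e s ^ p) * (e s / c s) ^ p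
      = c (s + 1) / c s ^ p := by
    rw [Real.div_rpow (le_of_lt (he s)) (le_of_lt hs)]
    field_simp
    try ring
  rw [this]
end

section
/- Let (e_s) be a sequence of positive real numbers with e_s → 0. If for some p > 1 and Q ∈ (0, ∞) one has e_{s+1}/(e_s)^p → Q, then (ln e_{s+1})/(ln e_s) → p; that is, C-order p (with p > 1) implies Q-order p. -/
open Filter

/-- C-order `p > 1` implies Q-order `p`. -/
theorem Q_order_of_C_order
    (e : ℕ → ℝ) (p Q : ℝ)
    (hpos : ∀ s, 0 < e s)
    (hlim : Tendsto e atTop (nhds 0))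
    (hp : 1 < p) (hQ : 0 < Q)
    (hC : Tendsto (fun s => e (s + 1) / e s ^ p) atTop (nhds Q)) :
    Tendsto (fun s => Real.log (e (s + 1)) / Real.log (e s)) atTop (nhds p) := by
  have hf : Tendsto (fun s => Real.log (e (s + 1) / e s ^ p)) atTop (nhds (Real.log Q)) :=
    ((Real.continuousAt_log hQ.ne').tendsto.comp hC)
  have hlog : Tendsto (fun s => Real.log (e s)) atTop atBot := by
    have h0 : Tendsto e atTop (nhdsWithin 0 (Set.Ioi 0)) :=
      tendsto_nhdsWithin_of_tendsto_nhds_of_eventually_within _ hlim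
        (Eventually.of_forall fun s => hpos s)
    exact Real.tendsto_log_nhdsGT_zero.comp h0
  have hdiv : Tendsto (fun s => Real.log (e (s + 1) / e s ^ p) / Real.log (e s)) atTop (nhds 0) := by
    have h1 := hf.div_atTop (tendsto_neg_atTop_iff.mpr hlog)
    have h2 := h1.neg
    simp only [neg_zero] at h2
    refine h2.congr fun s => ?_
    rw [div_neg, neg_neg]
  have hsmall : ∀ᶠ s in atTop, e s < 1 := hlim.eventually_lt_const (by norm_num)
  have heq : ∀ᶠ s in atTop,
      Real.log (e (s + 1) / e s ^ p) / Real.log (e s) + p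
        = Real.log (e (s + 1)) / Real.log (e s) := by
    filter_upwards [hsmall] with s hs
    have hne : Real.log (e s) ≠ 0 := by
      have : Real.log (e s) < 0 := Real.log_neg (hpos s) hs
      linarith
    rw [Real.log_div (hpos (s + 1)).ne' (Real.rpow_pos_of_pos (hpos s) p).ne',
      Real.log_rpow (hpos s)]
    field_simp
    ring
  have := hdiv.add_const p
  rw [zero_add] at this
  exact this.congr' heq
end

section
/- Let (x_s) be a sequence of real numbers converging to x*, with errors e_s = |x* - x_s| satisfying 0 < e_s < 1 for all s. Suppose the errors have Q-order p for some p > 1, i.e. (ln e_{s+1})/(ln e_s) → p. Then the corrections c_s = |x_{s+1} - x_s| are eventually positive and satisfy (ln c_{s+1})/(ln c_s) → p; that is, Q-order p implies Q'-order p. -/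
open Filter

/-- Q-order `p > 1` of the errors implies Q'-order `p` of the corrections. -/
theorem Qprime_order_of_Q_order
    (x : ℕ → ℝ) (xstar : ℝ) (p : ℝ)
    (hconv : Tendsto x atTop (nhds xstar))
    (hpos : ∀ s, 0 < |xstar - x s|) (hlt : ∀ s, |xstar - x s| < 1)
    (hp : 1 < p)
    (hQ : Tendsto (fun s => Real.log |xstar - x (s + 1)| / Real.log |xstar - x s|)
      atTop (nhds p)) :
    (∀ᶠ s in atTop, 0 < |x (s + 1) - x s|) ∧
      Tendsto (fun s => Real.log |x (s + 2) - x (s + 1)| / Real.log |x (s + 1) - x s|)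
        atTop (nhds p) := by
  set e : ℕ → ℝ := fun s => |xstar - x s| with he
  set c : ℕ → ℝ := fun s => |x (s + 1) - x s| with hc
  set L : ℕ → ℝ := fun s => Real.log (e s) with hLdef
  -- e → 0
  have he0 : Tendsto e atTop (nhds 0) := by
    have h1 : Tendsto (fun s => xstar - x s) atTop (nhds (xstar - xstar)) :=
      tendsto_const_nhds.sub hconv
    simpa using h1.abs
  have heS : Tendsto e atTop (nhdsWithin 0 (Set.Ioi 0)) :=
    tendsto_nhdsWithin_of_tendsto_nhds_of_eventually_within _ he0
      (Eventually.of_forall fun s => hpos s)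
  -- L → -∞
  have hLbot : Tendsto L atTop atBot :=
    Real.tendsto_log_nhdsGT_zero.comp heS
  have hLneg : ∀ᶠ s in atTop, L s < 0 := hLbot.eventually (eventually_lt_atBot 0)
  have hLne : ∀ᶠ s in atTop, L s ≠ 0 := hLneg.mono fun s hs => ne_of_lt hs
  -- L (s+1) - L s → -∞
  have hdiff : Tendsto (fun s => L (s + 1) - L s) atTop atBot := by
    have hmain : Tendsto (fun s => (L (s + 1) / L s - 1) * L s) atTop atBot := by
      have h1 : Tendsto (fun s => L (s + 1) / L s - 1) atTop (nhds (p - 1)) :=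
        hQ.sub tendsto_const_nhds
      exact h1.pos_mul_atBot (by linarith) hLbot
    refine hmain.congr' ?_
    filter_upwards [hLne] with s hs
    field_simp
  -- e (s+1) / e s → 0
  have hratio : Tendsto (fun s => e (s + 1) / e s) atTop (nhds 0) := by
    have hexp : Tendsto (fun s => Real.exp (L (s + 1) - L s)) atTop (nhds 0) :=
      Real.tendsto_exp_atBot.comp hdiff
    refine hexp.congr fun s => ?_
    rw [Real.exp_sub, Real.exp_log (hpos (s + 1)), Real.exp_log (hpos s)]
  -- |c s - e s| ≤ e (s+1)
  have hbound : ∀ s, |c s - e s| ≤ e (s + 1) := by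
    intro s
    have := abs_sub_abs_le_abs_sub (x (s + 1) - x s) (xstar - x s)
    calc |c s - e s| ≤ |(x (s + 1) - x s) - (xstar - x s)| :=
          abs_abs_sub_abs_le_abs_sub _ _
      _ = e (s + 1) := by rw [he]; ring_nf; rw [abs_sub_comm]; ring_nf
  -- r s := c s / e s → 1
  have hr : Tendsto (fun s => c s / e s) atTop (nhds 1) := by
    rw [← tendsto_sub_nhds_zero_iff]
    rw [tendsto_zero_iff_abs_tendsto_zero]
    refine squeeze_zero (fun s => abs_nonneg _) (fun s => ?_) hratio
    simp only [Function.comp_apply]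
    have hes := hpos s
    rw [show c s / e s - 1 = (c s - e s) / e s by rw [sub_div, div_self (show e s ≠ 0 from hes.ne')]]
    rw [abs_div, abs_of_pos hes]
    exact div_le_div_of_nonneg_right (hbound s) hes.le
  -- eventually c s > 0
  have hcpos : ∀ᶠ s in atTop, 0 < c s := by
    have h1 : ∀ᶠ s in atTop, 0 < c s / e s :=
      hr.eventually (eventually_gt_nhds one_pos)
    filter_upwards [h1] with s hs
    have := hpos s
    have : c s = (c s / e s) * e s := by rw [div_mul_cancel₀ _ (show e s ≠ 0 from this.ne')]
    rw [this]; positivity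
  refine ⟨hcpos, ?_⟩
  -- g s := log (c s / e s) → 0
  have hg : Tendsto (fun s => Real.log (c s / e s)) atTop (nhds 0) := by
    have := (Real.continuousAt_log one_ne_zero).tendsto.comp hr
    simpa [Function.comp_def] using this
  set g : ℕ → ℝ := fun s => Real.log (c s / e s) with hgdef
  -- log (c s) = L s + g s eventually
  have hlog : ∀ᶠ s in atTop, Real.log (c s) = L s + g s := by
    filter_upwards [hcpos] with s hs
    have hes := hpos s
    rw [hgdef, hLdef]
    simp only
    rw [Real.log_div (ne_of_gt hs) (ne_of_gt hes)]
    ring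
  -- 1 / L s → 0
  have hLinv : Tendsto (fun s => (L s)⁻¹) atTop (nhds 0) := by
    have h1 : Tendsto (fun s => -L s) atTop atTop := tendsto_neg_atTop_iff.mpr hLbot
    have h2 := h1.inv_tendsto_atTop
    have h3 : Tendsto (fun s => -(-L s)⁻¹) atTop (nhds (-0)) := h2.neg
    simp only [inv_neg, neg_neg, neg_zero] at h3
    exact h3
  have hgsucc : Tendsto (fun s => g (s + 1)) atTop (nhds 0) :=
    hg.comp (tendsto_add_atTop_nat 1)
  -- numerator and denominator over L s
  have hnum : Tendsto (fun s => (L (s + 1) + g (s + 1)) / L s) atTop (nhds (p + 0)) := by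
    have hmul : Tendsto (fun s => g (s + 1) * (L s)⁻¹) atTop (nhds 0) := by
      simpa using hgsucc.mul hLinv
    have h1 : Tendsto (fun s => L (s + 1) / L s + g (s + 1) * (L s)⁻¹) atTop (nhds (p + 0)) :=
      hQ.add hmul
    refine h1.congr' ?_
    filter_upwards [hLne] with s hs
    field_simp
  have hden : Tendsto (fun s => (L s + g s) / L s) atTop (nhds (1 + 0)) := by
    have hmul : Tendsto (fun s => g s * (L s)⁻¹) atTop (nhds 0) := by
      simpa using hg.mul hLinv
    have h1 : Tendsto (fun s => (1 : ℝ) + g s * (L s)⁻¹) atTop (nhds (1 + 0)) :=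
      tendsto_const_nhds.add hmul
    refine h1.congr' ?_
    filter_upwards [hLne] with s hs
    field_simp
  have hfinal : Tendsto (fun s => ((L (s + 1) + g (s + 1)) / L s) / ((L s + g s) / L s))
      atTop (nhds ((p + 0) / (1 + 0))) :=
    hnum.div hden (by norm_num)
  have hres : Tendsto (fun s => (L (s + 1) + g (s + 1)) / (L s + g s)) atTop (nhds p) := by
    have h2 : Tendsto (fun s => ((L (s + 1) + g (s + 1)) / L s) / ((L s + g s) / L s))
        atTop (nhds p) := by
      convert hfinal using 2; norm_num
    refine (h2.congr' ?_)
    filter_upwards [hLne] with s hs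
    rw [div_div_div_comm, div_self hs, div_one]
  refine hres.congr' ?_
  have hlogsucc : ∀ᶠ s in atTop, Real.log (c (s + 1)) = L (s + 1) + g (s + 1) :=
    (tendsto_add_atTop_nat 1).eventually hlog
  filter_upwards [hlog, hlogsucc] with s h1 h2
  show (L (s + 1) + g (s + 1)) / (L s + g s) = Real.log (c (s + 1)) / Real.log (c s)
  rw [h1, h2]
end

section
/- Let (e_s) be a sequence of positive real numbers with e_s → 0, and suppose that for some p > 1 and Q ∈ (0, ∞) one has e_{s+1}/(e_s)^p → Q. Then |ln e_s|^{1/s} → p; that is, C-order p (with p > 1) implies R-order p. -/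
open Filter

set_option maxHeartbeats 1000000 in
/-- C-order `p > 1` implies R-order `p`. -/
theorem R_order_of_C_order
    (e : ℕ → ℝ) (p Q : ℝ)
    (hpos : ∀ s, 0 < e s)
    (hlim : Tendsto e atTop (nhds 0))
    (hp : 1 < p) (hQ : 0 < Q)
    (hC : Tendsto (fun s => e (s + 1) / e s ^ p) atTop (nhds Q)) :
    Tendsto (fun s => |Real.log (e s)| ^ (1 / (s : ℝ))) atTop (nhds p) := by
  have hp0 : (0:ℝ) < p := lt_trans one_pos hp
  have hp1 : p - 1 ≠ 0 := by linarith
  have hpne : p ≠ 0 := hp0.ne'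
  have hppow : ∀ s : ℕ, (0:ℝ) < p ^ s := fun s => pow_pos hp0 s
  set c : ℝ := Real.log Q / (p - 1) with hc
  set δ : ℕ → ℝ := fun s => Real.log (e (s+1)) - p * Real.log (e s) - Real.log Q with hδdef
  have hδ0 : Tendsto δ atTop (nhds 0) := by
    have h1 : Tendsto (fun s => Real.log (e (s+1) / e s ^ p)) atTop (nhds (Real.log Q)) :=
      (Real.continuousAt_log hQ.ne').tendsto.comp hC
    have h2 := h1.sub_const (Real.log Q)
    rw [sub_self] at h2
    refine h2.congr fun s => ?_
    rw [Real.log_div (hpos _).ne' (Real.rpow_pos_of_pos (hpos s) p).ne',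
      Real.log_rpow (hpos s)]
  set u : ℕ → ℝ := fun s => Real.log (e s) + c with hu
  have hurec : ∀ s, u (s+1) = p * u s + δ s := by
    intro s
    simp only [hu, hδdef, hc]
    field_simp
    ring
  set f : ℕ → ℝ := fun k => δ k / p ^ (k+1) with hf
  set v : ℕ → ℝ := fun s => u s / p ^ s with hv
  have hvrec : ∀ s, v (s+1) = v s + f s := by
    intro s
    simp only [hv, hf, hurec s]
    field_simp
    ring
  have hvsum : ∀ s, v s = v 0 + ∑ k ∈ Finset.range s, f k := by
    intro s
    induction s with
    | zero => simp
    | succ n ih => rw [hvrec n, ih, Finset.sum_range_succ]; ring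
  obtain ⟨M, hM⟩ : ∃ M, ∀ k, |δ k| ≤ M := by
    obtain ⟨M, hM⟩ := hδ0.abs.bddAbove_range
    exact ⟨M, fun k => hM (Set.mem_range_self k)⟩
  have hM0 : 0 ≤ M := le_trans (abs_nonneg _) (hM 0)
  have hinvp : (0:ℝ) ≤ 1/p := by positivity
  have hinvp1 : (1:ℝ)/p < 1 := by rw [div_lt_one hp0]; exact hp
  have hgeo : Summable (fun k : ℕ => (1/p) ^ k) := summable_geometric_of_lt_one hinvp hinvp1
  have hnormf : ∀ k, ‖f k‖ ≤ M * (1/p) ^ k := by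
    intro k
    have hk : ‖f k‖ = |δ k| / p ^ (k+1) := by
      simp [hf, abs_div, abs_of_pos hp0, Real.norm_eq_abs, abs_pow]
    rw [hk]
    calc |δ k| / p ^ (k+1) ≤ M / p ^ k := by
          apply div_le_div₀ hM0 (hM k) (hppow k)
          exact pow_le_pow_right₀ hp.le (Nat.le_succ k)
      _ = M * (1/p) ^ k := by rw [one_div, inv_pow, div_eq_mul_inv]
  have hsumfn : Summable (fun k => ‖f k‖) :=
    Summable.of_nonneg_of_le (fun _ => norm_nonneg _) hnormf (hgeo.mul_left M)
  have hsumf : Summable f := hsumfn.of_norm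
  set A : ℝ := v 0 + ∑' k, f k with hA
  have hvA : Tendsto v atTop (nhds A) := by
    have h1 := hsumf.hasSum.tendsto_sum_nat
    have h2 := (tendsto_const_nhds : Tendsto (fun _ : ℕ => v 0) atTop (nhds (v 0))).add h1
    exact h2.congr fun s => (hvsum s).symm
  have hubot : Tendsto u atTop atBot := by
    have h1 : Tendsto (fun s => Real.log (e s)) atTop atBot := by
      have h2 : Tendsto e atTop (nhdsWithin 0 (Set.Ioi 0)) :=
        tendsto_nhdsWithin_of_tendsto_nhds_of_eventually_within _ hlim
          (Eventually.of_forall fun s => hpos s)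
      exact Real.tendsto_log_nhdsGT_zero.comp h2
    simpa [hu] using tendsto_atBot_add_const_right atTop c h1
  have hAle : A ≤ 0 := by
    refine le_of_tendsto hvA ?_
    filter_upwards [hubot.eventually_le_atBot 0] with s hs
    exact div_nonpos_of_nonpos_of_nonneg hs (hppow s).le
  have hAne : A ≠ 0 := by
    intro hA0
    have htail : ∀ s, v s = A - ∑' k, f (k + s) := by
      intro s
      have h1 := hsumf.sum_add_tsum_nat_add s
      rw [hvsum s, hA]
      linarith [h1]
    have hu0 : Tendsto u atTop (nhds 0) := by
      rw [Metric.tendsto_atTop]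
      intro ε hε
      have hε' : 0 < ε * (p-1) / 2 := by
        have : 0 < p - 1 := by linarith
        positivity
      obtain ⟨N, hN⟩ := (Metric.tendsto_atTop.mp hδ0) (ε * (p-1)/2) hε'
      refine ⟨N, fun s hs => ?_⟩
      have hδk : ∀ k : ℕ, |δ (k + s)| ≤ ε * (p-1)/2 := by
        intro k
        have := hN (k + s) (le_trans hs (Nat.le_add_left s k))
        rw [Real.dist_eq, sub_zero] at this
        exact this.le
      have hus : u s = p ^ s * v s := by
        simp only [hv]
        field_simp
      have hsum_shift : Summable (fun k => ‖f (k + s)‖) := (summable_nat_add_iff s).mpr hsumfn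
      have hgeo2 : Summable (fun k : ℕ => ε * (p-1)/2 * (1/p) ^ (k + s + 1)) := by
        exact ((summable_nat_add_iff (s+1)).mpr hgeo).mul_left _
      have hterm : ∀ k : ℕ, ‖f (k + s)‖ ≤ ε * (p-1)/2 * (1/p) ^ (k + s + 1) := by
        intro k
        have hk : ‖f (k + s)‖ = |δ (k + s)| / p ^ (k + s + 1) := by
          simp [hf, abs_div, abs_of_pos hp0, Real.norm_eq_abs, abs_pow]
        have h1 : ε * (p-1)/2 * (1/p) ^ (k + s + 1) = (ε * (p-1)/2) / p ^ (k + s + 1) := by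
          rw [one_div, inv_pow]; ring
        rw [hk, h1]
        gcongr
        exact hδk k
      have htsum_le : ∑' k, ‖f (k + s)‖ ≤ ∑' k : ℕ, ε * (p-1)/2 * (1/p) ^ (k + s + 1) :=
        Summable.tsum_le_tsum hterm hsum_shift hgeo2
      have htsum_geo : ∑' k : ℕ, ε * (p-1)/2 * (1/p) ^ (k + s + 1)
          = ε * (p-1)/2 * (1/p) ^ (s + 1) * (1 - 1/p)⁻¹ := by
        have h1 : ∀ k : ℕ, ε * (p-1)/2 * (1/p) ^ (k + s + 1)
            = (ε * (p-1)/2 * (1/p) ^ (s + 1)) * (1/p) ^ k := by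
          intro k; rw [pow_add, pow_add]; ring
        rw [tsum_congr h1, tsum_mul_left, tsum_geometric_of_lt_one hinvp hinvp1]
      have hbound : |u s| ≤ ε / 2 := by
        have hvabs : |v s| ≤ ε * (p-1)/2 * (1/p) ^ (s + 1) * (1 - 1/p)⁻¹ := by
          rw [htail s, hA0, zero_sub, abs_neg]
          calc |∑' k, f (k + s)| ≤ ∑' k, ‖f (k + s)‖ := norm_tsum_le_tsum_norm hsum_shift
            _ ≤ _ := htsum_le.trans_eq htsum_geo
        have : |u s| = p ^ s * |v s| := by
          rw [hus, abs_mul, abs_of_pos (hppow s)]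
        rw [this]
        calc p ^ s * |v s| ≤ p ^ s * (ε * (p-1)/2 * (1/p) ^ (s + 1) * (1 - 1/p)⁻¹) := by
              exact mul_le_mul_of_nonneg_left hvabs (hppow s).le
          _ = ε / 2 := by
              rw [one_div, inv_pow]
              have h2 : (1 - p⁻¹) = (p - 1)/p := by field_simp
              rw [h2]
              field_simp
              ring
      rw [Real.dist_eq, sub_zero]
      calc |u s| ≤ ε / 2 := hbound
        _ < ε := by linarith
    exact absurd hubot (not_tendsto_atBot_of_tendsto_nhds hu0)
  have hAneg : A < 0 := lt_of_le_of_ne hAle hAne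
  set g : ℕ → ℝ := fun s => v s - c / p ^ s with hg
  have hgA : Tendsto g atTop (nhds A) := by
    have h1 : Tendsto (fun s : ℕ => c / p ^ s) atTop (nhds 0) := by
      have h2 : Tendsto (fun s : ℕ => (1/p) ^ s) atTop (nhds 0) :=
        tendsto_pow_atTop_nhds_zero_of_lt_one hinvp hinvp1
      have h3 := h2.const_mul c
      rw [mul_zero] at h3
      refine h3.congr fun s => ?_
      rw [one_div, inv_pow, div_eq_mul_inv]
    simpa using hvA.sub h1
  have hglt : ∀ᶠ s in atTop, g s < A / 2 :=
    hgA.eventually_lt_const (by linarith)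
  have habs : Tendsto (fun s => |g s|) atTop (nhds (-A)) := by
    have := hgA.abs
    rwa [abs_of_neg hAneg] at this
  have hlogg : Tendsto (fun s => Real.log |g s|) atTop (nhds (Real.log (-A))) :=
    ((Real.continuousAt_log (by linarith : -A ≠ 0)).tendsto).comp habs
  have hdiv : Tendsto (fun s : ℕ => Real.log |g s| / (s : ℝ)) atTop (nhds 0) :=
    hlogg.div_atTop tendsto_natCast_atTop_atTop
  have hmain : Tendsto (fun s : ℕ => Real.exp (Real.log p + Real.log |g s| / s)) atTop
      (nhds p) := by
    have h1 := (tendsto_const_nhds : Tendsto (fun _ : ℕ => Real.log p) atTop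
      (nhds (Real.log p))).add hdiv
    rw [add_zero] at h1
    have h2 := (Real.continuous_exp.tendsto _).comp h1
    simpa [Real.exp_log hp0, Function.comp_def] using h2
  refine Tendsto.congr' ?_ hmain
  filter_upwards [eventually_ge_atTop 1, hglt] with s hs1 hgs
  have hs0 : (s : ℝ) ≠ 0 := Nat.cast_ne_zero.mpr (by omega)
  have hgneg : g s < 0 := lt_of_lt_of_le hgs (by linarith)
  have hgpos : 0 < |g s| := abs_pos.mpr hgneg.ne
  have hloge : Real.log (e s) = p ^ s * g s := by
    simp only [hg, hv, hu]
    field_simp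
    ring
  have habs_eq : |Real.log (e s)| = p ^ s * |g s| := by
    rw [hloge, abs_mul, abs_of_pos (hppow s)]
  have hpos2 : 0 < |Real.log (e s)| := by rw [habs_eq]; positivity
  rw [Real.rpow_def_of_pos hpos2, habs_eq,
    Real.log_mul (hppow s).ne' hgpos.ne', Real.log_pow]
  congr 1
  field_simp
end

section
/- There exists a sequence of real numbers (x_s) converging to a limit x* whose errors e_s = |x* - x_s| are positive and converge C-linearly, i.e. e_{s+1}/e_s → Q for some Q ∈ (0, 1), but whose corrections c_s = |x_{s+1} - x_s| are positive and the ratio c_{s+1}/c_s does not converge; that is, C-linear order does not imply C'-linear order. -/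
open Filter

noncomputable def xseq (s : ℕ) : ℝ := (-1 : ℝ) ^ (s / 2) * (1/2 : ℝ) ^ s

lemma abs_xseq (s : ℕ) : |xseq s| = (1/2 : ℝ) ^ s := by
  rw [xseq, abs_mul, abs_pow, abs_pow, abs_neg, abs_one, abs_of_pos (by norm_num : (0:ℝ) < 1/2)]
  norm_num

lemma corr_xseq (s : ℕ) :
    |xseq (s + 1) - xseq s| = (1/2 : ℝ) ^ s * (if s % 2 = 0 then (1/2 : ℝ) else 3/2) := by
  rcases Nat.even_or_odd s with ⟨k, rfl⟩ | ⟨k, rfl⟩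
  · have h1 : (k + k) / 2 = k := by omega
    have h2 : (k + k + 1) / 2 = k := by omega
    have h3 : (k + k) % 2 = 0 := by omega
    simp only [xseq, h1, h2, h3, if_pos rfl]
    have : (-1 : ℝ) ^ k * (1/2 : ℝ) ^ (k + k + 1) - (-1 : ℝ) ^ k * (1/2) ^ (k + k)
        = (-1 : ℝ) ^ k * ((1/2 : ℝ) ^ (k + k) * (-(1/2))) := by
      rw [pow_succ]; ring
    rw [this, abs_mul, abs_mul, abs_pow, abs_pow, abs_neg, abs_neg, abs_one,
      abs_of_nonneg (by norm_num : (0:ℝ) ≤ 1/2)]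
    norm_num
  · have h1 : (2 * k + 1) / 2 = k := by omega
    have h2 : (2 * k + 1 + 1) / 2 = k + 1 := by omega
    have h3 : ¬ (2 * k + 1) % 2 = 0 := by omega
    simp only [xseq, h1, h2, if_neg h3]
    have : (-1 : ℝ) ^ (k + 1) * (1/2 : ℝ) ^ (2 * k + 1 + 1) - (-1 : ℝ) ^ k * (1/2) ^ (2 * k + 1)
        = (-1 : ℝ) ^ k * ((1/2 : ℝ) ^ (2 * k + 1) * (-(3/2))) := by
      rw [pow_succ, pow_succ]; ring
    rw [this, abs_mul, abs_mul, abs_pow, abs_pow, abs_neg, abs_neg, abs_one,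
      abs_of_nonneg (by norm_num : (0:ℝ) ≤ 1/2), abs_of_nonneg (by norm_num : (0:ℝ) ≤ 3/2)]
    norm_num

lemma ratio_xseq (s : ℕ) :
    |xseq (s + 2) - xseq (s + 1)| / |xseq (s + 1) - xseq s|
      = if s % 2 = 0 then (3/2 : ℝ) else 1/6 := by
  have hpow : (0 : ℝ) < (1/2 : ℝ) ^ s := by positivity
  rw [show s + 2 = (s + 1) + 1 from rfl, corr_xseq, corr_xseq, pow_succ]
  rcases Nat.even_or_odd s with h | h
  · have h0 : s % 2 = 0 := Nat.even_iff.mp h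
    have h1 : ¬ (s + 1) % 2 = 0 := by omega
    simp only [h0, if_pos rfl, if_neg h1, if_true]
    field_simp
  · have hm := Nat.odd_iff.mp h
    have h0 : ¬ s % 2 = 0 := by omega
    have h1 : (s + 1) % 2 = 0 := by omega
    simp only [if_neg h0, if_pos h1]
    field_simp
    ring

/-- There is a convergent sequence whose errors converge C-linearly but whose
corrections' ratio does not converge: C-linear order does not imply C'-linear order. -/
theorem C_linear_not_imp_Cprime_linear :
    ∃ (x : ℕ → ℝ) (xstar Q : ℝ),
      Tendsto x atTop (nhds xstar) ∧
      (∀ s, 0 < |xstar - x s|) ∧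
      0 < Q ∧ Q < 1 ∧
      Tendsto (fun s => |xstar - x (s + 1)| / |xstar - x s|) atTop (nhds Q) ∧
      (∀ s, 0 < |x (s + 1) - x s|) ∧
      ¬ ∃ l : ℝ, Tendsto (fun s => |x (s + 2) - x (s + 1)| / |x (s + 1) - x s|)
        atTop (nhds l) := by
  refine ⟨xseq, 0, 1/2, ?_, ?_, by norm_num, by norm_num, ?_, ?_, ?_⟩
  · -- convergence to 0
    have h : Tendsto (fun s : ℕ => (1/2 : ℝ) ^ s) atTop (nhds 0) :=
      tendsto_pow_atTop_nhds_zero_of_lt_one (by norm_num) (by norm_num)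
    refine squeeze_zero_norm (fun s => ?_) h
    rw [Real.norm_eq_abs, abs_xseq]
  · intro s
    rw [zero_sub, abs_neg, abs_xseq]
    positivity
  · -- error ratio is constant 1/2
    have : (fun s : ℕ => |0 - xseq (s + 1)| / |0 - xseq s|) = fun _ => (1/2 : ℝ) := by
      funext s
      rw [zero_sub, zero_sub, abs_neg, abs_neg, abs_xseq, abs_xseq, pow_succ]
      have : (0 : ℝ) < (1/2 : ℝ) ^ s := by positivity
      field_simp
    rw [this]
    exact tendsto_const_nhds
  · intro s
    rw [corr_xseq]
    rcases Nat.even_or_odd s with h | h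
    · rw [if_pos (Nat.even_iff.mp h)]; positivity
    · have hm := Nat.odd_iff.mp h
      rw [if_neg (by omega : ¬ s % 2 = 0)]; positivity
  · rintro ⟨l, hl⟩
    have h2k : Tendsto (fun k : ℕ => 2 * k) atTop atTop :=
      tendsto_atTop_atTop.mpr fun b => ⟨b, fun a ha => by omega⟩
    have h2k1 : Tendsto (fun k : ℕ => 2 * k + 1) atTop atTop :=
      tendsto_atTop_atTop.mpr fun b => ⟨b, fun a ha => by omega⟩
    have he : Tendsto (fun k : ℕ =>
        |xseq (2 * k + 2) - xseq (2 * k + 1)| / |xseq (2 * k + 1) - xseq (2 * k)|)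
        atTop (nhds l) := hl.comp h2k
    have ho : Tendsto (fun k : ℕ =>
        |xseq (2 * k + 1 + 2) - xseq (2 * k + 1 + 1)| / |xseq (2 * k + 1 + 1) - xseq (2 * k + 1)|)
        atTop (nhds l) := hl.comp h2k1
    have heq : (fun k : ℕ =>
        |xseq (2 * k + 2) - xseq (2 * k + 1)| / |xseq (2 * k + 1) - xseq (2 * k)|)
        = fun _ => (3/2 : ℝ) := by
      funext k
      rw [ratio_xseq, if_pos (by omega)]
    have hoq : (fun k : ℕ =>
        |xseq (2 * k + 1 + 2) - xseq (2 * k + 1 + 1)| / |xseq (2 * k + 1 + 1) - xseq (2 * k + 1)|)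
        = fun _ => (1/6 : ℝ) := by
      funext k
      rw [ratio_xseq, if_neg (by omega)]
    rw [heq] at he
    rw [hoq] at ho
    have h1 : l = 3/2 := tendsto_nhds_unique he tendsto_const_nhds
    have h2 : l = 1/6 := tendsto_nhds_unique ho tendsto_const_nhds
    norm_num [h1] at h2
end

section
/- Let θ : ℝ → ℝ be differentiable, let D : ℝ → ℝ be Lipschitz continuous with constant L_D ≥ 0, and let L, Δt, Δz > 0 and m > 0 be constants such that m ≤ θ'(x) ≤ L for all x ∈ ℝ. Fix ψ ∈ ℝ and let (e_s) be a sequence of real numbers satisfying, for every s, the fixed-point error recursion L·(e_{s+1} − e_s) + θ(ψ + e_s) − θ(ψ) = (Δt/Δz²)·(D(ψ + e_s) − D(ψ)). Then for every s, |e_{s+1}| ≤ q·|e_s|, where q = 1 − (m − L_D·Δt/Δz²)/L. Moreover, if m > L_D·Δt/Δz², then 0 ≤ q < 1, so the recursion is a contraction. -/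
open Filter

private lemma mono_slope (θ : ℝ → ℝ) (c : ℝ) (hθ : Differentiable ℝ θ)
    (h : ∀ x : ℝ, c ≤ deriv θ x) :
    ∀ a b : ℝ, a ≤ b → c * (b - a) ≤ θ b - θ a := by
  intro a b hab
  have hmono : Monotone (fun x => θ x - c * x) := by
    apply monotone_of_deriv_nonneg
    · exact (hθ.sub ((differentiable_id.const_mul c)))
    · intro x
      have hd : HasDerivAt (fun x => θ x - c * x) (deriv θ x - c) x := by
        simpa using ((hθ x).hasDerivAt.fun_sub ((hasDerivAt_id x).const_mul c))
      rw [hd.deriv]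
      linarith [h x]
  have := hmono hab
  simp only at this
  linarith

/-- One-step contraction estimate for the error recursion of the explicit FDM
`L`-scheme for Richards' equation. -/
theorem L_scheme_contraction_step
    (θ D : ℝ → ℝ) (LD L Δt Δz m : ℝ)
    (hθ : Differentiable ℝ θ)
    (hLD : 0 ≤ LD)
    (hD : ∀ a b : ℝ, |D a - D b| ≤ LD * |a - b|)
    (hL : 0 < L) (hΔt : 0 < Δt) (hΔz : 0 < Δz) (hm : 0 < m)
    (hderiv : ∀ x : ℝ, m ≤ deriv θ x ∧ deriv θ x ≤ L)
    (ψ : ℝ) (e : ℕ → ℝ)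
    (hrec : ∀ s : ℕ,
      L * (e (s + 1) - e s) + θ (ψ + e s) - θ ψ
        = (Δt / Δz ^ 2) * (D (ψ + e s) - D ψ)) :
    (∀ s : ℕ, |e (s + 1)| ≤ (1 - (m - LD * Δt / Δz ^ 2) / L) * |e s|) ∧
      (LD * Δt / Δz ^ 2 < m →
        0 ≤ 1 - (m - LD * Δt / Δz ^ 2) / L ∧ 1 - (m - LD * Δt / Δz ^ 2) / L < 1) := by
  have hmL : m ≤ L := le_trans (hderiv 0).1 (hderiv 0).2
  have hz2 : (0:ℝ) < Δz ^ 2 := by positivity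
  have hlow := mono_slope θ m hθ (fun x => (hderiv x).1)
  have hup : ∀ a b : ℝ, a ≤ b → θ b - θ a ≤ L * (b - a) := by
    intro a b hab
    have := mono_slope (fun x => -θ x) (-L) (hθ.neg)
      (fun x => by
        rw [deriv.fun_neg]; linarith [(hderiv x).2]) a b hab
    nlinarith
  -- key bound: |L * t - (θ (ψ + t) - θ ψ)| ≤ (L - m) * |t|
  have key : ∀ t : ℝ, |L * t - (θ (ψ + t) - θ ψ)| ≤ (L - m) * |t| := by
    intro t
    rcases le_total 0 t with ht | ht
    · have h1 := hlow ψ (ψ + t) (by linarith)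
      have h2 := hup ψ (ψ + t) (by linarith)
      rw [abs_of_nonneg ht, abs_le]
      constructor <;> nlinarith
    · have h1 := hlow (ψ + t) ψ (by linarith)
      have h2 := hup (ψ + t) ψ (by linarith)
      rw [abs_of_nonpos ht, abs_le]
      constructor <;> nlinarith
  constructor
  · intro s
    have hr := hrec s
    have hDb : |D (ψ + e s) - D ψ| ≤ LD * |e s| := by
      have := hD (ψ + e s) ψ
      simpa using this
    have step : L * |e (s + 1)| ≤ (L - m) * |e s| + (Δt / Δz ^ 2) * (LD * |e s|) := by
      have heq : L * e (s + 1)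
          = (L * e s - (θ (ψ + e s) - θ ψ)) + (Δt / Δz ^ 2) * (D (ψ + e s) - D ψ) := by
        linarith
      calc L * |e (s + 1)| = |L * e (s + 1)| := by
            rw [abs_mul, abs_of_pos hL]
        _ ≤ |L * e s - (θ (ψ + e s) - θ ψ)| + |(Δt / Δz ^ 2) * (D (ψ + e s) - D ψ)| := by
            rw [heq]; exact abs_add_le _ _
        _ ≤ (L - m) * |e s| + (Δt / Δz ^ 2) * (LD * |e s|) := by
            gcongr
            · exact key (e s)
            · calc |Δt / Δz ^ 2 * (D (ψ + e s) - D ψ)|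
                  = Δt / Δz ^ 2 * |D (ψ + e s) - D ψ| := by
                    rw [abs_mul, abs_of_pos (by positivity : (0:ℝ) < Δt / Δz ^ 2)]
                _ ≤ Δt / Δz ^ 2 * (LD * |e s|) := by gcongr
    have hq : (1 - (m - LD * Δt / Δz ^ 2) / L) * |e s|
        = ((L - m) * |e s| + (Δt / Δz ^ 2) * (LD * |e s|)) / L := by
      field_simp
      ring
    rw [hq, le_div_iff₀ hL]
    linarith [step]
  · intro hcond
    constructor
    · have : (m - LD * Δt / Δz ^ 2) / L ≤ 1 := by
        rw [div_le_one hL]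
        have : 0 ≤ LD * Δt / Δz ^ 2 := by positivity
        linarith
      linarith
    · have : 0 < (m - LD * Δt / Δz ^ 2) / L := by
        apply div_pos _ hL
        linarith
      linarith
end

section
/- Let θ : ℝ → ℝ be differentiable, let D : ℝ → ℝ be Lipschitz continuous with constant L_D ≥ 0, and let L, Δt, Δz > 0 and m > 0 be constants such that m ≤ θ'(x) ≤ L for all x ∈ ℝ and m > L_D·Δt/Δz². Fix ψ ∈ ℝ and let (e_s) be a sequence of real numbers satisfying, for every s, L·(e_{s+1} − e_s) + θ(ψ + e_s) − θ(ψ) = (Δt/Δz²)·(D(ψ + e_s) − D(ψ)). Then |e_s| ≤ q^s·|e_0| for all s, where q = 1 − (m − L_D·Δt/Δz²)/L ∈ [0,1); in particular e_s → 0, i.e. the explicit L-scheme iterates converge (at least linearly) to the solution of the implicit scheme. -/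
open Filter

/-- Linear convergence of the explicit FDM `L`-scheme iterates to the solution of
the implicit scheme: `|e_s| ≤ q^s |e_0|` with `q ∈ [0,1)`, hence `e_s → 0`. -/
theorem L_scheme_linear_convergence
    (θ D : ℝ → ℝ) (LD L Δt Δz m : ℝ)
    (hθ : Differentiable ℝ θ)
    (hLD : 0 ≤ LD)
    (hD : ∀ a b : ℝ, |D a - D b| ≤ LD * |a - b|)
    (hL : 0 < L) (hΔt : 0 < Δt) (hΔz : 0 < Δz) (hm : 0 < m)
    (hderiv : ∀ x : ℝ, m ≤ deriv θ x ∧ deriv θ x ≤ L)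
    (hcond : LD * Δt / Δz ^ 2 < m)
    (ψ : ℝ) (e : ℕ → ℝ)
    (hrec : ∀ s : ℕ,
      L * (e (s + 1) - e s) + θ (ψ + e s) - θ ψ
        = (Δt / Δz ^ 2) * (D (ψ + e s) - D ψ)) :
    (0 ≤ 1 - (m - LD * Δt / Δz ^ 2) / L) ∧
      (1 - (m - LD * Δt / Δz ^ 2) / L < 1) ∧
      (∀ s : ℕ, |e s| ≤ (1 - (m - LD * Δt / Δz ^ 2) / L) ^ s * |e 0|) ∧
      Tendsto e atTop (nhds 0) := by
  have hΔz2 : (0:ℝ) < Δz ^ 2 := by positivity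
  have hc0 : 0 ≤ LD * Δt / Δz ^ 2 := by positivity
  have hmL : m ≤ L := le_trans (hderiv 0).1 (hderiv 0).2
  set c : ℝ := LD * Δt / Δz ^ 2 with hc
  set q : ℝ := 1 - (m - c) / L with hq
  have hq0 : 0 ≤ q := by
    have : (m - c) / L ≤ 1 := by
      rw [div_le_one hL]; linarith
    simp only [hq]; linarith
  have hq1 : q < 1 := by
    have : 0 < (m - c) / L := div_pos (by linarith) hL
    simp only [hq]; linarith
  -- auxiliary function
  set f : ℝ → ℝ := fun x => x - θ x / L with hf
  have hfd : ∀ x : ℝ, HasDerivAt f (1 - deriv θ x / L) x := fun x =>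
    (hasDerivAt_id x).sub (((hθ x).hasDerivAt).div_const L)
  have hflip : ∀ a b : ℝ, |f a - f b| ≤ (1 - m / L) * |a - b| := by
    intro a b
    have hbd : ∀ x ∈ (Set.univ : Set ℝ), ‖deriv f x‖ ≤ 1 - m / L := by
      intro x _
      rw [(hfd x).deriv, Real.norm_eq_abs]
      have h1 := (hderiv x).1
      have h2 := (hderiv x).2
      have hub : deriv θ x / L ≤ 1 := by rw [div_le_one hL]; exact h2
      have hlb : m / L ≤ deriv θ x / L := by
        exact (div_le_div_iff_of_pos_right hL).mpr h1
      rw [abs_le]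
      constructor <;> linarith
    have := convex_univ.norm_image_sub_le_of_norm_deriv_le
      (fun x _ => (hfd x).differentiableAt) hbd (Set.mem_univ b) (Set.mem_univ a)
    simpa [Real.norm_eq_abs] using this
  -- one-step contraction
  have hstep : ∀ s : ℕ, |e (s + 1)| ≤ q * |e s| := by
    intro s
    have h := hrec s
    have hLne : L ≠ 0 := ne_of_gt hL
    have he1 : e (s + 1) = (f (ψ + e s) - f ψ) + (Δt / Δz ^ 2 / L) * (D (ψ + e s) - D ψ) := by
      have : L * e (s + 1) = L * ((f (ψ + e s) - f ψ) + (Δt / Δz ^ 2 / L) * (D (ψ + e s) - D ψ)) := by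
        simp only [hf]
        field_simp
        field_simp at h
        linear_combination h
      exact mul_left_cancel₀ hLne this
    calc |e (s + 1)| ≤ |f (ψ + e s) - f ψ| + |(Δt / Δz ^ 2 / L) * (D (ψ + e s) - D ψ)| := by
          rw [he1]; exact abs_add_le _ _
      _ ≤ (1 - m / L) * |e s| + (Δt / Δz ^ 2 / L) * (LD * |e s|) := by
          apply add_le_add
          · have := hflip (ψ + e s) ψ
            simpa using this
          · rw [abs_mul, abs_of_pos (by positivity : (0:ℝ) < Δt / Δz ^ 2 / L)]
            have := hD (ψ + e s) ψ
            simp only [add_sub_cancel_left] at this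
            exact mul_le_mul_of_nonneg_left this (by positivity)
      _ = q * |e s| := by
          simp only [hq, hc]; field_simp; ring
  have hbound : ∀ s : ℕ, |e s| ≤ q ^ s * |e 0| := by
    intro s
    induction s with
    | zero => simp
    | succ n ih =>
        calc |e (n + 1)| ≤ q * |e n| := hstep n
          _ ≤ q * (q ^ n * |e 0|) := mul_le_mul_of_nonneg_left ih hq0
          _ = q ^ (n + 1) * |e 0| := by ring
  refine ⟨hq0, hq1, hbound, ?_⟩
  have hgeo : Tendsto (fun s : ℕ => q ^ s * |e 0|) atTop (nhds 0) := by
    have := tendsto_pow_atTop_nhds_zero_of_lt_one hq0 hq1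
    simpa using this.mul_const |e 0|
  exact squeeze_zero_norm (fun s => by simpa [Real.norm_eq_abs] using hbound s) hgeo
end
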